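/- Every bounded bifunctional f : H_r × K_c → ℂ on the product of a row Hilbertian and a column Hilbertian is automatically strongly completely bounded, with ‖f‖_scb = ‖f‖. -/

import Mathlib

open ContinuousLinearMap in
/-- Parseval-type expansion inside a finite-dimensional subspace. -/
lemma inner_eq_sum_basis_aux {L : Type*} [NormedAddCommGroup L] [InnerProductSpace ℂ L]
    (V : Submodule ℂ L) [FiniteDimensional ℂ V]
    {u v : L} (hu : u ∈ V) (hv : v ∈ V) :
    (inner ℂ u v : ℂ) = ∑ k, inner ℂ u ((stdOrthonormalBasis ℂ V k : L)) *
      inner ℂ ((stdOrthonormalBasis ℂ V k : L)) v := by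
  have := (stdOrthonormalBasis ℂ V).sum_inner_mul_inner ⟨u, hu⟩ ⟨v, hv⟩
  simpa [Submodule.coe_inner] using this.symm

/-- Parseval identity inside a finite-dimensional subspace. -/
lemma aux_parseval {L : Type*} [NormedAddCommGroup L] [InnerProductSpace ℂ L]
    (V : Submodule ℂ L) [FiniteDimensional ℂ V] {u : L} (hu : u ∈ V) :
    ∑ k, ‖(inner ℂ u ((stdOrthonormalBasis ℂ V k : L)) : ℂ)‖ ^ 2 = ‖u‖ ^ 2 := by
  have h5 := (stdOrthonormalBasis ℂ V).sum_inner_mul_inner ⟨u, hu⟩ ⟨u, hu⟩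
  simp only [Submodule.coe_inner] at h5
  rw [InnerProductSpace.norm_sq_eq_re_inner (𝕜 := ℂ) u, ← h5, map_sum]
  refine Finset.sum_congr rfl fun k _ => ?_
  rw [← inner_conj_symm u, RCLike.conj_mul, RCLike.norm_conj, ← RCLike.ofReal_pow,
    RCLike.ofReal_re]

/-- Norm of an orthonormal linear combination. -/
lemma aux_norm_comb {E : Type*} [NormedAddCommGroup E] [InnerProductSpace ℂ E]
    {m : ℕ} {v : Fin m → E} (hv : Orthonormal ℂ v) (l : Fin m → ℂ) :
    ‖∑ j, l j • v j‖ ^ 2 = ∑ j, ‖l j‖ ^ 2 := by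
  rw [InnerProductSpace.norm_sq_eq_re_inner (𝕜 := ℂ), hv.inner_sum l l Finset.univ, map_sum]
  refine Finset.sum_congr rfl fun j _ => ?_
  rw [RCLike.conj_mul, ← RCLike.ofReal_pow, RCLike.ofReal_re]

/-- Bilinear expansion of a bifunctional on linear combinations. -/
lemma aux_bilin {H K : Type*} [NormedAddCommGroup H] [InnerProductSpace ℂ H]
    [NormedAddCommGroup K] [InnerProductSpace ℂ K]
    (f : H →L[ℂ] K →L[ℂ] ℂ) {m n : ℕ} (y : Fin m → H) (x : Fin n → K)
    (c : Fin m → ℂ) (d : Fin n → ℂ) :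
    f (∑ j, c j • y j) (∑ i, d i • x i) = ∑ j, ∑ i, f (y j) (x i) * (c j * d i) := by
  simp only [map_sum, map_smul, ContinuousLinearMap.sum_apply, ContinuousLinearMap.smul_apply,
    smul_eq_mul, Finset.mul_sum]
  rw [Finset.sum_comm]
  refine Finset.sum_congr rfl fun j _ => Finset.sum_congr rfl fun i _ => by ring

open ContinuousLinearMap in
/-- Row bound: `∑ⱼ ‖bⱼ* η‖² ≤ ‖∑ⱼ bⱼ bⱼ*‖ ‖η‖²`. -/
lemma aux_row_bound {L : Type*} [NormedAddCommGroup L] [InnerProductSpace ℂ L] [CompleteSpace L]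
    {m : ℕ} (b : Fin m → (L →L[ℂ] L)) (η : L) :
    ∑ j, ‖adjoint (b j) η‖ ^ 2 ≤ ‖∑ j, b j ∘L adjoint (b j)‖ * ‖η‖ ^ 2 := by
  have h7 : ∑ j, ‖adjoint (b j) η‖ ^ 2 =
      RCLike.re (inner ℂ η ((∑ j, b j ∘L adjoint (b j)) η) : ℂ) := by
    rw [ContinuousLinearMap.sum_apply, inner_sum, map_sum]
    refine Finset.sum_congr rfl fun j _ => ?_
    rw [ContinuousLinearMap.comp_apply, ← ContinuousLinearMap.adjoint_inner_left,
      ← InnerProductSpace.norm_sq_eq_re_inner (𝕜 := ℂ)]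
  rw [h7]
  calc RCLike.re (inner ℂ η ((∑ j, b j ∘L adjoint (b j)) η) : ℂ)
      ≤ ‖(inner ℂ η ((∑ j, b j ∘L adjoint (b j)) η) : ℂ)‖ := RCLike.re_le_norm _
    _ ≤ ‖η‖ * ‖(∑ j, b j ∘L adjoint (b j)) η‖ := norm_inner_le_norm _ _
    _ ≤ ‖η‖ * (‖∑ j, b j ∘L adjoint (b j)‖ * ‖η‖) :=
        mul_le_mul_of_nonneg_left (ContinuousLinearMap.le_opNorm _ _) (norm_nonneg _)
    _ = ‖∑ j, b j ∘L adjoint (b j)‖ * ‖η‖ ^ 2 := by ring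

open ContinuousLinearMap in
/-- Column bound: `∑ᵢ ‖aᵢ ξ‖² ≤ ‖∑ᵢ aᵢ* aᵢ‖ ‖ξ‖²`. -/
lemma aux_col_bound {L : Type*} [NormedAddCommGroup L] [InnerProductSpace ℂ L] [CompleteSpace L]
    {n : ℕ} (a : Fin n → (L →L[ℂ] L)) (ξ : L) :
    ∑ i, ‖a i ξ‖ ^ 2 ≤ ‖∑ i, adjoint (a i) ∘L a i‖ * ‖ξ‖ ^ 2 := by
  have h7 : ∑ i, ‖a i ξ‖ ^ 2 =
      RCLike.re (inner ℂ ξ ((∑ i, adjoint (a i) ∘L a i) ξ) : ℂ) := by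
    rw [ContinuousLinearMap.sum_apply, inner_sum, map_sum]
    refine Finset.sum_congr rfl fun i _ => ?_
    rw [ContinuousLinearMap.comp_apply, ContinuousLinearMap.adjoint_inner_right,
      ← InnerProductSpace.norm_sq_eq_re_inner (𝕜 := ℂ)]
  rw [h7]
  calc RCLike.re (inner ℂ ξ ((∑ i, adjoint (a i) ∘L a i) ξ) : ℂ)
      ≤ ‖(inner ℂ ξ ((∑ i, adjoint (a i) ∘L a i) ξ) : ℂ)‖ := RCLike.re_le_norm _
    _ ≤ ‖ξ‖ * ‖(∑ i, adjoint (a i) ∘L a i) ξ‖ := norm_inner_le_norm _ _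
    _ ≤ ‖ξ‖ * (‖∑ i, adjoint (a i) ∘L a i‖ * ‖ξ‖) :=
        mul_le_mul_of_nonneg_left (ContinuousLinearMap.le_opNorm _ _) (norm_nonneg _)
    _ = ‖∑ i, adjoint (a i) ∘L a i‖ * ‖ξ‖ ^ 2 := by ring

open ContinuousLinearMap in
/-- The rank-one projection onto a unit vector is a compact operator. -/
lemma rank_one_compact_aux {L : Type*} [NormedAddCommGroup L] [InnerProductSpace ℂ L]
    (w : L) : IsCompactOperator ((innerSL ℂ w).smulRight w) := by
  have h1 : IsCompactOperator (ContinuousLinearMap.toSpanSingleton ℂ w) := by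
    refine ⟨(ContinuousLinearMap.toSpanSingleton ℂ w) '' Metric.closedBall 0 1,
      ((isCompact_closedBall 0 1).image (ContinuousLinearMap.toSpanSingleton ℂ w).continuous), ?_⟩
    exact Filter.mem_of_superset (Metric.closedBall_mem_nhds 0 one_pos)
      (Set.subset_preimage_image _ _)
  have h2 := h1.comp_clm (innerSL ℂ w)
  have : ⇑((innerSL ℂ w).smulRight w) = (ContinuousLinearMap.toSpanSingleton ℂ w) ∘ (innerSL ℂ w) := by
    funext v; simp [ContinuousLinearMap.toSpanSingleton_apply]
  rwa [this]

open ContinuousLinearMap in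
/-- Proposition 11: every bounded bifunctional `f : H_r × K_c → ℂ` is automatically
strongly completely bounded with `‖f‖_scb = ‖f‖`.  Elements of `KH_r` and `KK_c`
are written `v = Σⱼ bⱼ ⊗ yⱼ` and `u = Σᵢ aᵢ ⊗ xᵢ` with compact coefficients and
orthonormal vectors, with quantum norms `‖v‖ = ‖Σⱼ bⱼ bⱼ*‖^{1/2}` (row) and
`‖u‖ = ‖Σᵢ aᵢ* aᵢ‖^{1/2}` (column); the strong amplification is
`f_s(v, u) = Σᵢⱼ f(yⱼ, xᵢ) bⱼ aᵢ`.  The statement: a constant `C ≥ 0` bounds `f`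
iff it bounds `f_s`. -/
theorem row_column_bifunctional_scb
    {L : Type*} [NormedAddCommGroup L] [InnerProductSpace ℂ L] [CompleteSpace L]
    [Nontrivial L]
    {H K : Type*} [NormedAddCommGroup H] [InnerProductSpace ℂ H] [CompleteSpace H]
    [NormedAddCommGroup K] [InnerProductSpace ℂ K] [CompleteSpace K]
    (f : H →L[ℂ] K →L[ℂ] ℂ) (C : ℝ) (hC : 0 ≤ C) :
    (∀ (y : H) (x : K), ‖f y x‖ ≤ C * ‖y‖ * ‖x‖) ↔
      (∀ (m n : ℕ) (b : Fin m → (L →L[ℂ] L)) (a : Fin n → (L →L[ℂ] L))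
        (y : Fin m → H) (x : Fin n → K),
        (∀ j, IsCompactOperator (b j)) → (∀ i, IsCompactOperator (a i)) →
        Orthonormal ℂ y → Orthonormal ℂ x →
        ‖∑ j, ∑ i, f (y j) (x i) • (b j ∘L a i)‖ ≤
          C * Real.sqrt ‖∑ j, b j ∘L adjoint (b j)‖ *
            Real.sqrt ‖∑ i, adjoint (a i) ∘L a i‖) := by
  constructor
  · -- forward: boundedness implies strong complete boundedness
    intro hf m n b a y x hb ha hy hx
    classical
    set T : L →L[ℂ] L := ∑ j, ∑ i, f (y j) (x i) • (b j ∘L a i) with hT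
    set Rb : ℝ := ‖∑ j, b j ∘L adjoint (b j)‖ with hRb
    set Ra : ℝ := ‖∑ i, adjoint (a i) ∘L a i‖ with hRa
    have hRb0 : (0:ℝ) ≤ Rb := norm_nonneg _
    have hRa0 : (0:ℝ) ≤ Ra := norm_nonneg _
    have key : ∀ η ξ : L, ‖(inner ℂ η (T ξ) : ℂ)‖ ≤
        (C * Real.sqrt Rb * Real.sqrt Ra) * ‖η‖ * ‖ξ‖ := by
      intro η ξ
      set B : Fin m → L := fun j => adjoint (b j) η with hB
      set A : Fin n → L := fun i => a i ξ with hA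
      set V : Submodule ℂ L := Submodule.span ℂ (Set.range B ∪ Set.range A) with hV
      have hfd : FiniteDimensional ℂ V :=
        FiniteDimensional.span_of_finite ℂ ((Set.finite_range B).union (Set.finite_range A))
      have hBV : ∀ j, B j ∈ V := fun j => Submodule.subset_span (Or.inl ⟨j, rfl⟩)
      have hAV : ∀ i, A i ∈ V := fun i => Submodule.subset_span (Or.inr ⟨i, rfl⟩)
      set e : Fin (Module.finrank ℂ V) → L := fun k => (stdOrthonormalBasis ℂ V k : L) with he
      set c : Fin m → Fin (Module.finrank ℂ V) → ℂ := fun j k => inner ℂ (B j) (e k) with hc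
      set d : Fin n → Fin (Module.finrank ℂ V) → ℂ := fun i k => inner ℂ (e k) (A i) with hd
      set u : Fin (Module.finrank ℂ V) → H := fun k => ∑ j, c j k • y j with hu
      set v : Fin (Module.finrank ℂ V) → K := fun k => ∑ i, d i k • x i with hv
      -- step 1: the pairing equals ∑ₖ f(uₖ, vₖ)
      have h1 : (inner ℂ η (T ξ) : ℂ) = ∑ k, f (u k) (v k) := by
        have h0 : (inner ℂ η (T ξ) : ℂ) = ∑ j, ∑ i, f (y j) (x i) * inner ℂ (B j) (A i) := by
          simp only [hT, ContinuousLinearMap.sum_apply, inner_sum,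
            ContinuousLinearMap.smul_apply, inner_smul_right, ContinuousLinearMap.comp_apply,
            hB, hA, ContinuousLinearMap.adjoint_inner_left]
        have hBA : ∀ j i, (inner ℂ (B j) (A i) : ℂ) = ∑ k, c j k * d i k := fun j i =>
          inner_eq_sum_basis_aux V (hBV j) (hAV i)
        rw [h0]
        calc ∑ j, ∑ i, f (y j) (x i) * inner ℂ (B j) (A i)
            = ∑ j, ∑ i, ∑ k, f (y j) (x i) * (c j k * d i k) := by
              refine Finset.sum_congr rfl fun j _ => Finset.sum_congr rfl fun i _ => ?_
              rw [hBA j i, Finset.mul_sum]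
          _ = ∑ j, ∑ k, ∑ i, f (y j) (x i) * (c j k * d i k) := by
              exact Finset.sum_congr rfl fun j _ => Finset.sum_comm
          _ = ∑ k, ∑ j, ∑ i, f (y j) (x i) * (c j k * d i k) := Finset.sum_comm
          _ = ∑ k, f (u k) (v k) := by
              refine Finset.sum_congr rfl fun k _ => ?_
              rw [hu, hv]
              exact (aux_bilin f y x (fun j => c j k) (fun i => d i k)).symm
      -- norms of the combinations
      have hun : ∀ k, ‖u k‖ = Real.sqrt (∑ j, ‖c j k‖ ^ 2) := by
        intro k
        rw [hu, ← aux_norm_comb hy (fun j => c j k), Real.sqrt_sq (norm_nonneg _)]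
      have hvn : ∀ k, ‖v k‖ = Real.sqrt (∑ i, ‖d i k‖ ^ 2) := by
        intro k
        rw [hv, ← aux_norm_comb hx (fun i => d i k), Real.sqrt_sq (norm_nonneg _)]
      -- Parseval inside V
      have hPb : ∀ j, ∑ k, ‖c j k‖ ^ 2 = ‖B j‖ ^ 2 := fun j => aux_parseval V (hBV j)
      have hPa : ∀ i, ∑ k, ‖d i k‖ ^ 2 = ‖A i‖ ^ 2 := by
        intro i
        rw [← aux_parseval V (hAV i)]
        refine Finset.sum_congr rfl fun k _ => ?_
        rw [hd, ← inner_conj_symm (A i) (e k), RCLike.norm_conj]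
      -- assemble
      calc ‖(inner ℂ η (T ξ) : ℂ)‖ = ‖∑ k, f (u k) (v k)‖ := by rw [h1]
        _ ≤ ∑ k, ‖f (u k) (v k)‖ := norm_sum_le _ _
        _ ≤ ∑ k, C * ‖u k‖ * ‖v k‖ := Finset.sum_le_sum fun k _ => hf (u k) (v k)
        _ = C * ∑ k, Real.sqrt (∑ j, ‖c j k‖ ^ 2) * Real.sqrt (∑ i, ‖d i k‖ ^ 2) := by
            rw [Finset.mul_sum]
            exact Finset.sum_congr rfl fun k _ => by rw [hun k, hvn k]; ring
        _ ≤ C * (Real.sqrt (∑ k, ∑ j, ‖c j k‖ ^ 2) * Real.sqrt (∑ k, ∑ i, ‖d i k‖ ^ 2)) := by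
            refine mul_le_mul_of_nonneg_left ?_ hC
            exact Real.sum_sqrt_mul_sqrt_le _ (fun k => by positivity) (fun k => by positivity)
        _ ≤ C * (Real.sqrt (Rb * ‖η‖ ^ 2) * Real.sqrt (Ra * ‖ξ‖ ^ 2)) := by
            refine mul_le_mul_of_nonneg_left ?_ hC
            refine mul_le_mul (Real.sqrt_le_sqrt ?_) (Real.sqrt_le_sqrt ?_)
              (Real.sqrt_nonneg _) (Real.sqrt_nonneg _)
            · rw [Finset.sum_comm]
              calc ∑ j, ∑ k, ‖c j k‖ ^ 2 = ∑ j, ‖B j‖ ^ 2 :=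
                    Finset.sum_congr rfl fun j _ => hPb j
                _ ≤ Rb * ‖η‖ ^ 2 := by rw [hRb, hB]; exact aux_row_bound b η
            · rw [Finset.sum_comm]
              calc ∑ i, ∑ k, ‖d i k‖ ^ 2 = ∑ i, ‖A i‖ ^ 2 :=
                    Finset.sum_congr rfl fun i _ => hPa i
                _ ≤ Ra * ‖ξ‖ ^ 2 := by rw [hRa, hA]; exact aux_col_bound a ξ
        _ = (C * Real.sqrt Rb * Real.sqrt Ra) * ‖η‖ * ‖ξ‖ := by
            rw [Real.sqrt_mul hRb0 (‖η‖ ^ 2), Real.sqrt_mul hRa0 (‖ξ‖ ^ 2),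
              Real.sqrt_sq (norm_nonneg η), Real.sqrt_sq (norm_nonneg ξ)]
            ring
    -- conclude the operator norm bound
    refine ContinuousLinearMap.opNorm_le_bound T (by positivity) fun ξ => ?_
    rcases eq_or_ne (T ξ) 0 with hz | hz
    · rw [hz, norm_zero]
      positivity
    · have h9 := key (T ξ) ξ
      rw [inner_self_eq_norm_sq_to_K] at h9
      rw [norm_pow, RCLike.norm_ofReal, abs_norm] at h9
      have hTz : 0 < ‖T ξ‖ := norm_pos_iff.mpr hz
      nlinarith [h9, hTz]
  · -- reverse: strong complete boundedness implies boundedness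
    intro h y x
    rcases eq_or_ne y 0 with rfl | hy0
    · simp only [map_zero, ContinuousLinearMap.zero_apply, norm_zero]
      positivity
    rcases eq_or_ne x 0 with rfl | hx0
    · simp only [map_zero, norm_zero]
      positivity
    obtain ⟨z, hz⟩ := exists_ne (0 : L)
    set w : L := (‖z‖ : ℂ)⁻¹ • z with hw
    have hw1 : ‖w‖ = 1 := norm_smul_inv_norm hz
    set p : L →L[ℂ] L := (innerSL ℂ w).smulRight w with hp
    have hp_app : ∀ v : L, p v = (inner ℂ w v : ℂ) • w := fun v => rfl
    have hww : (inner ℂ w w : ℂ) = 1 := by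
      rw [inner_self_eq_norm_sq_to_K, hw1]; norm_num
    have hpp : p ∘L p = p := by
      ext v
      rw [ContinuousLinearMap.comp_apply, hp_app, hp_app, inner_smul_right, hww, mul_one]
    have hadj : ContinuousLinearMap.adjoint p = p := by
      symm
      rw [ContinuousLinearMap.eq_adjoint_iff]
      intro s t
      rw [hp_app, hp_app, inner_smul_left, inner_smul_right, inner_conj_symm]
      ring
    have hpnorm : ‖p‖ = 1 := by
      refine le_antisymm (ContinuousLinearMap.opNorm_le_bound _ zero_le_one fun v => ?_) ?_
      · rw [hp_app, norm_smul, hw1, mul_one, one_mul]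
        exact (norm_inner_le_norm w v).trans (by rw [hw1, one_mul])
      · have h11 := ContinuousLinearMap.le_opNorm p w
        rw [hp_app, hww, one_smul, hw1, mul_one] at h11
        linarith
    have hcomp : IsCompactOperator p := rank_one_compact_aux w
    set y' : H := (‖y‖ : ℂ)⁻¹ • y with hy'
    set x' : K := (‖x‖ : ℂ)⁻¹ • x with hx'
    have hy1 : ‖y'‖ = 1 := norm_smul_inv_norm hy0
    have hx1 : ‖x'‖ = 1 := norm_smul_inv_norm hx0
    have hony : Orthonormal ℂ (fun _ : Fin 1 => y') := by
      rw [orthonormal_iff_ite]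
      intro i j
      rw [Subsingleton.elim i j, if_pos rfl, inner_self_eq_norm_sq_to_K, hy1]
      norm_num
    have honx : Orthonormal ℂ (fun _ : Fin 1 => x') := by
      rw [orthonormal_iff_ite]
      intro i j
      rw [Subsingleton.elim i j, if_pos rfl, inner_self_eq_norm_sq_to_K, hx1]
      norm_num
    have happ := h 1 1 (fun _ => p) (fun _ => p) (fun _ => y') (fun _ => x')
      (fun _ => hcomp) (fun _ => hcomp) hony honx
    simp only [Fin.sum_univ_one] at happ
    rw [hadj, hpp] at happ
    simp only [norm_smul, hpnorm, Real.sqrt_one, mul_one] at happ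
    -- now happ : ‖f y' x'‖ ≤ C
    have hyne : (‖y‖ : ℂ) ≠ 0 := by
      exact_mod_cast norm_ne_zero_iff.mpr hy0
    have hxne : (‖x‖ : ℂ) ≠ 0 := by
      exact_mod_cast norm_ne_zero_iff.mpr hx0
    have hyx : f y x = (‖y‖ : ℂ) * ((‖x‖ : ℂ) * f y' x') := by
      rw [hy', hx']
      simp only [map_smul, ContinuousLinearMap.smul_apply, smul_eq_mul]
      field_simp
    calc ‖f y x‖ = ‖y‖ * (‖x‖ * ‖f y' x'‖) := by
          rw [hyx, norm_mul, norm_mul, Complex.norm_real, Complex.norm_real, norm_norm, norm_norm]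
      _ ≤ ‖y‖ * (‖x‖ * C) :=
          mul_le_mul_of_nonneg_left (mul_le_mul_of_nonneg_left happ (norm_nonneg _))
            (norm_nonneg _)
      _ = C * ‖y‖ * ‖x‖ := by ring
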